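/- The Euclidean projection onto the OWL ball G_ε = {x : Ω_w(x) ≤ ε} satisfies proj_{G_ε}(v) = sign(v) ⊙ (P(|v|)^T proj_{G_ε}(|v|_↓)), where P(|v|) sorts |v| in non-increasing order. -/
import Mathlib


open Finset

/-- The vector of absolute values of x, sorted in non-increasing order. -/
noncomputable def absSorted {n : ℕ} (x : Fin n → ℝ) : Fin n → ℝ :=
  fun i => |x (Tuple.sort (fun j => -|x j|) i)|

/-- The ordered weighted l1 norm Omega_w(x). -/
noncomputable def owl {n : ℕ} (w x : Fin n → ℝ) : ℝ := ∑ i, w i * absSorted x i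

private lemma absSorted_antitone {n : ℕ} (x : Fin n → ℝ) : Antitone (absSorted x) := by
  intro i j hij
  have := Tuple.monotone_sort (fun j => -|x j|) hij
  simp only [Function.comp_apply] at this
  unfold absSorted
  linarith

private lemma absSorted_comp {n : ℕ} (x : Fin n → ℝ) (π : Equiv.Perm (Fin n)) :
    absSorted (fun i => x (π i)) = absSorted x := by
  have h := Tuple.comp_perm_comp_sort_eq_comp_sort (f := fun j => -|x j|) (σ := π)
  funext i
  have h2 := congrFun h i
  simp only [Function.comp_def, Function.comp_apply] at h2
  unfold absSorted
  simp only []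
  linarith

private lemma absSorted_abs {n : ℕ} (x : Fin n → ℝ) :
    absSorted (fun i => |x i|) = absSorted x := by
  unfold absSorted
  simp only [abs_abs]

private lemma owl_perm_le {n : ℕ} (w x : Fin n → ℝ) (hw : Antitone w) (π : Equiv.Perm (Fin n)) :
    ∑ i, w i * |x (π i)| ≤ owl w x := by
  have hmono : Monovary w (absSorted x) := by
    intro i j hij
    by_contra hc
    push_neg at hc
    have hji : j < i := by
      by_contra hji
      push_neg at hji
      exact absurd (absSorted_antitone x hji) (not_le.mpr hij)
    exact absurd (hw hji.le) (not_le.mpr hc)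
  set s := Tuple.sort (fun j => -|x j|) with hs
  set τ : Equiv.Perm (Fin n) := π.trans s.symm with hτ
  have hval : ∀ i, |x (π i)| = absSorted x (τ i) := by
    intro i
    unfold absSorted
    rw [← hs, hτ]
    simp
  calc ∑ i, w i * |x (π i)| = ∑ i, w i * absSorted x (τ i) := by
        exact Finset.sum_congr rfl fun i _ => by rw [hval i]
    _ ≤ ∑ i, w i * absSorted x i := hmono.sum_mul_comp_perm_le_sum_mul
    _ = owl w x := rfl

private lemma owl_mono {n : ℕ} (w x y : Fin n → ℝ) (hw : Antitone w) (hnn : ∀ i, 0 ≤ w i)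
    (h : ∀ i, |x i| ≤ |y i|) : owl w x ≤ owl w y := by
  calc owl w x = ∑ i, w i * |x (Tuple.sort (fun j => -|x j|) i)| := rfl
    _ ≤ ∑ i, w i * |y (Tuple.sort (fun j => -|x j|) i)| :=
        Finset.sum_le_sum fun i _ => mul_le_mul_of_nonneg_left (h _) (hnn i)
    _ ≤ owl w y := owl_perm_le w y hw _

private lemma owl_comp {n : ℕ} (w x : Fin n → ℝ) (π : Equiv.Perm (Fin n)) :
    owl w (fun i => x (π i)) = owl w x := by
  unfold owl
  rw [absSorted_comp]

/-- The Euclidean projection onto the OWL ball of radius ε commutes with signs and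
sorting: proj(v) = sign(v) ⊙ P(|v|)ᵀ proj(|v|↓). -/
theorem owl_ball_proj_sort {n : ℕ} (w : Fin n → ℝ) (hmono : Antitone w)
    (hnonneg : ∀ i, 0 ≤ w i) (hne : w ≠ 0) (ε : ℝ) (hε : 0 < ε)
    (v p q : Fin n → ℝ) (σ : Equiv.Perm (Fin n))
    (hσ : Antitone fun i => |v (σ i)|)
    (hp : owl w p ≤ ε ∧ ∀ x, owl w x ≤ ε → ∑ i, (p i - v i) ^ 2 ≤ ∑ i, (x i - v i) ^ 2)
    (hq : owl w q ≤ ε ∧ ∀ x, owl w x ≤ ε →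
      ∑ i, (q i - |v (σ i)|) ^ 2 ≤ ∑ i, (x i - |v (σ i)|) ^ 2) :
    p = fun i => Real.sign (v i) * q (σ.symm i) := by
  obtain ⟨hpf, hpm⟩ := hp
  obtain ⟨hqf, hqm⟩ := hq
  set r : Fin n → ℝ := fun i => Real.sign (v i) * q (σ.symm i) with hr
  -- r is feasible
  have hsign : ∀ a : ℝ, |Real.sign a| ≤ 1 := by
    intro a
    rcases lt_trichotomy a 0 with h | h | h
    · rw [Real.sign_of_neg h]; norm_num
    · rw [h, Real.sign_zero]; norm_num
    · rw [Real.sign_of_pos h]; norm_num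
  have hrabs : ∀ i, |r i| ≤ |q (σ.symm i)| := by
    intro i
    rw [hr]
    simp only [abs_mul]
    calc |Real.sign (v i)| * |q (σ.symm i)| ≤ 1 * |q (σ.symm i)| :=
          mul_le_mul_of_nonneg_right (hsign _) (abs_nonneg _)
      _ = |q (σ.symm i)| := one_mul _
  have hrfeas : owl w r ≤ ε := by
    calc owl w r ≤ owl w (fun i => q (σ.symm i)) := owl_mono w _ _ hmono hnonneg hrabs
      _ = owl w q := owl_comp w q σ.symm
      _ ≤ ε := hqf
  -- distance chain
  have h1 : ∑ i, (r i - v i) ^ 2 ≤ ∑ i, (q i - |v (σ i)|) ^ 2 := by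
    rw [← Equiv.sum_comp σ (fun i => (r i - v i) ^ 2)]
    apply Finset.sum_le_sum
    intro j _
    have hrσ : r (σ j) = Real.sign (v (σ j)) * q j := by
      rw [hr]; simp
    simp only [Function.comp_apply, hrσ]
    rcases lt_trichotomy (v (σ j)) 0 with h | h | h
    · rw [Real.sign_of_neg h, abs_of_neg h]
      apply le_of_eq; ring
    · rw [h, Real.sign_zero]
      simpa using sq_nonneg (q j - |(0:ℝ)|)
    · rw [Real.sign_of_pos h, abs_of_pos h, one_mul]
  have h2 : ∑ i, (q i - |v (σ i)|) ^ 2 ≤ ∑ i, (p i - v i) ^ 2 := by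
    have hfe : owl w (fun j => |p (σ j)|) ≤ ε := by
      have e1 : owl w (fun j => |p (σ j)|) = owl w (fun j => |p j|) :=
        owl_comp w (fun j => |p j|) σ
      have e2 : owl w (fun j => |p j|) = owl w p := by
        unfold owl; rw [absSorted_abs]
      rw [e1, e2]; exact hpf
    calc ∑ i, (q i - |v (σ i)|) ^ 2 ≤ ∑ i, (|p (σ i)| - |v (σ i)|) ^ 2 :=
          hqm (fun j => |p (σ j)|) hfe
      _ ≤ ∑ i, (p (σ i) - v (σ i)) ^ 2 := by
          apply Finset.sum_le_sum
          intro i _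
          have hab := abs_abs_sub_abs_le_abs_sub (p (σ i)) (v (σ i))
          calc (|p (σ i)| - |v (σ i)|) ^ 2 = (abs (|p (σ i)| - |v (σ i)|)) ^ 2 := (sq_abs _).symm
            _ ≤ |p (σ i) - v (σ i)| ^ 2 := by
                apply pow_le_pow_left₀ (abs_nonneg _) hab
            _ = (p (σ i) - v (σ i)) ^ 2 := sq_abs _
      _ = ∑ i, (p i - v i) ^ 2 := Equiv.sum_comp σ (fun i => (p i - v i) ^ 2)
  have h3 : ∑ i, (p i - v i) ^ 2 ≤ ∑ i, (r i - v i) ^ 2 := hpm r hrfeas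
  have heq : ∑ i, (r i - v i) ^ 2 = ∑ i, (p i - v i) ^ 2 :=
    le_antisymm (h1.trans h2) h3
  -- midpoint is feasible
  set m : Fin n → ℝ := fun i => (p i + r i) / 2 with hmdef
  have hmfeas : owl w m ≤ ε := by
    set s := Tuple.sort (fun j => -|m j|) with hs
    have e1 : owl w m = ∑ i, w i * |m (s i)| := rfl
    have step : ∀ i, w i * |m (s i)| ≤ w i * |p (s i)| / 2 + w i * |r (s i)| / 2 := by
      intro i
      have habs : |m (s i)| ≤ (|p (s i)| + |r (s i)|) / 2 := by
        rw [hmdef]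
        simp only []
        rw [abs_div]
        have := abs_add_le (p (s i)) (r (s i))
        have h2' : |(2:ℝ)| = 2 := by norm_num
        rw [h2']
        linarith
      nlinarith [hnonneg i, abs_nonneg (m (s i))]
    calc owl w m ≤ ∑ i, (w i * |p (s i)| / 2 + w i * |r (s i)| / 2) := by
          rw [e1]; exact Finset.sum_le_sum fun i _ => step i
      _ = (∑ i, w i * |p (s i)|) / 2 + (∑ i, w i * |r (s i)|) / 2 := by
          rw [Finset.sum_add_distrib, Finset.sum_div, Finset.sum_div]
      _ ≤ ε / 2 + ε / 2 := by
          have hP := (owl_perm_le w p hmono s).trans hpf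
          have hR := (owl_perm_le w r hmono s).trans hrfeas
          linarith
      _ = ε := by ring
  -- parallelogram argument
  have hopt := hpm m hmfeas
  have expand : ∑ i, (m i - v i) ^ 2 =
      ∑ i, ((p i - v i) ^ 2 / 2) + ∑ i, ((r i - v i) ^ 2 / 2)
        - ∑ i, ((p i - r i) ^ 2 / 4) := by
    rw [← Finset.sum_add_distrib, ← Finset.sum_sub_distrib]
    apply Finset.sum_congr rfl
    intro i _
    rw [hmdef]
    ring
  rw [expand, ← Finset.sum_div, ← Finset.sum_div, ← Finset.sum_div] at hopt
  have key : ∑ i, (p i - r i) ^ 2 ≤ 0 := by linarith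
  have hz := (Finset.sum_eq_zero_iff_of_nonneg
      (fun j (_ : j ∈ Finset.univ) => sq_nonneg (p j - r j))).mp
    (le_antisymm key (Finset.sum_nonneg fun j _ => sq_nonneg _))
  funext i
  have h0 := hz i (Finset.mem_univ i)
  have : p i - r i = 0 := by
    nlinarith [sq_nonneg (p i - r i)]
  have : p i = r i := by linarith
  rw [this]
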